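/- In the quandle chain complex of R_4 with integer coefficients, the 2-chain (a,b) + (a*b,b*a) + (b,a) + (b*a,a*b) + (a,b*a) + (a*b,b) + (b*a,a) + (b,a*b) (with a=1, b=0) is a 2-cycle and is homologous to 2(f_1 + f_2), where f_1 = (a,b)+(a*b,b) and f_2 = (b,a)+(b*a,a), given that t_1 = (a,a*b) and t_2 = (b,b*a) are 2-torsion classes. -/

import Mathlib

/-- The dihedral quandle operation on `R_4 = ZMod 4`: `i * j = 2j - i`. -/
def dop (i j : ZMod 4) : ZMod 4 := 2 * j - i

/-- Quandle boundary of a basis triple: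
`∂(x,y,z) = (x,z) - (x*y,z) - (x,y) + (x*z,y*z)`. -/
noncomputable def d3single (x y z : ZMod 4) : (ZMod 4 × ZMod 4) →₀ ℤ :=
  Finsupp.single (x, z) 1 - Finsupp.single (dop x y, z) 1
    - Finsupp.single (x, y) 1 + Finsupp.single (dop x z, dop y z) 1

/-- Linear extension of the boundary to integral 3-chains. -/
noncomputable def d3 (w : (ZMod 4 × ZMod 4 × ZMod 4) →₀ ℤ) :
    (ZMod 4 × ZMod 4) →₀ ℤ :=
  w.sum fun p n => n • d3single p.1 p.2.1 p.2.2

/-- The degenerate 2-chains. -/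
noncomputable def deg2 : Submodule ℤ ((ZMod 4 × ZMod 4) →₀ ℤ) :=
  Submodule.span ℤ {f | ∃ x : ZMod 4, f = Finsupp.single (x, x) 1}

/-- The 8-term coloring cycle
`(a,b)+(a*b,b*a)+(b,a)+(b*a,a*b)+(a,b*a)+(a*b,b)+(b*a,a)+(b,a*b)`
with `a = 1`, `b = 0`, `a*b = 3`, `b*a = 2`. -/
noncomputable def z : (ZMod 4 × ZMod 4) →₀ ℤ :=
  Finsupp.single (1, 0) 1 + Finsupp.single (3, 2) 1 + Finsupp.single (0, 1) 1
    + Finsupp.single (2, 3) 1 + Finsupp.single (1, 2) 1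
    + Finsupp.single (3, 0) 1 + Finsupp.single (2, 1) 1
    + Finsupp.single (0, 3) 1

/-- `f_1 = (a,b) + (a*b,b)`. -/
noncomputable def f1 : (ZMod 4 × ZMod 4) →₀ ℤ :=
  Finsupp.single (1, 0) 1 + Finsupp.single (3, 0) 1

/-- `f_2 = (b,a) + (b*a,a)`. -/
noncomputable def f2 : (ZMod 4 × ZMod 4) →₀ ℤ :=
  Finsupp.single (0, 1) 1 + Finsupp.single (2, 1) 1

/-- `t_1 = (a, a*b)`. -/
noncomputable def t1 : (ZMod 4 × ZMod 4) →₀ ℤ := Finsupp.single (1, 3) 1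

/-- `t_2 = (b, b*a)`. -/
noncomputable def t2 : (ZMod 4 × ZMod 4) →₀ ℤ := Finsupp.single (0, 2) 1


noncomputable def w0 : (ZMod 4 × ZMod 4 × ZMod 4) →₀ ℤ :=
  Finsupp.single (0, 1, 0) 2 + Finsupp.single (0, 1, 3) (-1)
    + Finsupp.single (0, 2, 1) 2 + Finsupp.single (1, 0, 1) 2
    + Finsupp.single (1, 0, 2) (-1) + Finsupp.single (1, 0, 3) (-2)
    + Finsupp.single (1, 1, 0) (-2) + Finsupp.single (1, 2, 1) (-2)

lemma d3_add (v w : (ZMod 4 × ZMod 4 × ZMod 4) →₀ ℤ) :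
    d3 (v + w) = d3 v + d3 w := by
  unfold d3
  apply Finsupp.sum_add_index' (by intro a; simp) (by intro a b1 b2; rw [add_smul])

lemma d3_single (p : ZMod 4 × ZMod 4 × ZMod 4) (n : ℤ) :
    d3 (Finsupp.single p n) = n • d3single p.1 p.2.1 p.2.2 := by
  unfold d3
  rw [Finsupp.sum_single_index]
  simp

set_option maxHeartbeats 1000000 in
lemma key : z - (2 : ℤ) • (f1 + f2) - d3 w0 - (2 : ℤ) • t1 - (2 : ℤ) • t2
    = (-2 : ℤ) • Finsupp.single ((0 : ZMod 4), (0 : ZMod 4)) (1 : ℤ)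
      + (-2 : ℤ) • Finsupp.single ((1 : ZMod 4), (1 : ZMod 4)) (1 : ℤ) := by
  unfold w0
  rw [d3_add, d3_add, d3_add, d3_add, d3_add, d3_add, d3_add]
  simp only [d3_single]
  unfold z f1 f2 t1 t2 d3single dop
  ext ⟨i, j⟩
  fin_cases i <;> fin_cases j <;>
    · simp only [Finsupp.coe_add, Finsupp.coe_sub, Finsupp.coe_smul, Pi.add_apply,
        Pi.sub_apply, Pi.smul_apply, Finsupp.single_apply, smul_eq_mul]
      decide

/-- Given that `2t_1` and `2t_2` are boundaries (modulo degenerate chains), the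
8-term chain `z` is a 2-cycle and is homologous to `2(f_1 + f_2)` in the quandle
chain complex of `R_4`. -/
theorem eight_term_cycle_homologous (ht1 : ∃ w : (ZMod 4 × ZMod 4 × ZMod 4) →₀ ℤ,
      (2 : ℤ) • t1 - d3 w ∈ deg2)
    (ht2 : ∃ w : (ZMod 4 × ZMod 4 × ZMod 4) →₀ ℤ,
      (2 : ℤ) • t2 - d3 w ∈ deg2) :
    (z.sum (fun p n => n • (Finsupp.single p.1 (1 : ℤ)
        - Finsupp.single (dop p.1 p.2) 1)) = 0) ∧
    (∃ w : (ZMod 4 × ZMod 4 × ZMod 4) →₀ ℤ,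
      z - (2 : ℤ) • (f1 + f2) - d3 w ∈ deg2) := by
  constructor
  · rw [show z = Finsupp.single ((1 : ZMod 4), (0 : ZMod 4)) (1 : ℤ) + Finsupp.single (3, 2) 1 + Finsupp.single (0, 1) 1
      + Finsupp.single (2, 3) 1 + Finsupp.single (1, 2) 1
      + Finsupp.single (3, 0) 1 + Finsupp.single (2, 1) 1
      + Finsupp.single (0, 3) 1 from rfl]
    rw [Finsupp.sum_add_index' (by intro a; simp) (by intro a b1 b2; rw [add_smul]),
        Finsupp.sum_add_index' (by intro a; simp) (by intro a b1 b2; rw [add_smul]),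
        Finsupp.sum_add_index' (by intro a; simp) (by intro a b1 b2; rw [add_smul]),
        Finsupp.sum_add_index' (by intro a; simp) (by intro a b1 b2; rw [add_smul]),
        Finsupp.sum_add_index' (by intro a; simp) (by intro a b1 b2; rw [add_smul]),
        Finsupp.sum_add_index' (by intro a; simp) (by intro a b1 b2; rw [add_smul]),
        Finsupp.sum_add_index' (by intro a; simp) (by intro a b1 b2; rw [add_smul])]
    rw [Finsupp.sum_single_index (by simp), Finsupp.sum_single_index (by simp),
        Finsupp.sum_single_index (by simp), Finsupp.sum_single_index (by simp),
        Finsupp.sum_single_index (by simp), Finsupp.sum_single_index (by simp),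
        Finsupp.sum_single_index (by simp), Finsupp.sum_single_index (by simp)]
    unfold dop
    ext i
    simp only [Finsupp.coe_add, Finsupp.coe_sub, Finsupp.coe_smul, Finsupp.coe_zero,
          Pi.add_apply, Pi.sub_apply, Pi.smul_apply, Pi.zero_apply, Finsupp.single_apply,
          smul_eq_mul]
    fin_cases i <;> decide
  · obtain ⟨w1, h1⟩ := ht1
    obtain ⟨w2, h2⟩ := ht2
    refine ⟨w0 + w1 + w2, ?_⟩
    have heq : z - (2 : ℤ) • (f1 + f2) - d3 (w0 + w1 + w2)
        = ((2 : ℤ) • t1 - d3 w1) + ((2 : ℤ) • t2 - d3 w2)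
          + ((-2 : ℤ) • Finsupp.single ((0 : ZMod 4), (0 : ZMod 4)) (1 : ℤ)
            + (-2 : ℤ) • Finsupp.single ((1 : ZMod 4), (1 : ZMod 4)) (1 : ℤ)) := by
      rw [d3_add, d3_add, ← key]; abel
    rw [heq]
    refine Submodule.add_mem _ (Submodule.add_mem _ h1 h2) (Submodule.add_mem _ ?_ ?_) <;>
      exact Submodule.smul_mem _ _ (Submodule.subset_span ⟨_, rfl⟩)
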